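/- Let a > 0 and define the Dirichlet-type inner product ⟨p, q⟩ := ∫_{−a}^{a} ( p(x)·conj(q(x)) + p'(x)·conj(q'(x)) ) dx for complex polynomials p, q ∈ ℂ[z] (evaluated at real x, with p', q' the formal derivatives). Suppose p and q are both even (p(−z) = p(z) and q(−z) = q(z)) or both odd (p(−z) = −p(z) and q(−z) = −q(z)), and p(a) = p(−a) = q(a) = q(−a) = 0. Then ⟨z·p, q⟩ + ⟨p, z·q⟩ = 0, where z·p denotes the polynomial X·p. In particular the compression of multiplication by z to such a subspace is skew-adjoint. -/

import Mathlib

noncomputable section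

open Polynomial intervalIntegral

def dirInner (a : ℝ) (p q : Polynomial ℂ) : ℂ :=
  ∫ x in (-a)..a,
    (p.eval (x : ℂ) * (starRingEnd ℂ) (q.eval (x : ℂ))
      + (Polynomial.derivative p).eval (x : ℂ)
          * (starRingEnd ℂ) ((Polynomial.derivative q).eval (x : ℂ)))

-- odd function has zero symmetric interval integral
lemma odd_integral_zero (a : ℝ) (f : ℝ → ℂ) (hf : ∀ x, f (-x) = -f x) :
    (∫ x in (-a)..a, f x) = 0 := by
  have h := intervalIntegral.integral_comp_neg (a := -a) (b := a) (f := f)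
  simp only [neg_neg] at h
  have h2 : (∫ x in (-a)..a, f (-x)) = ∫ x in (-a)..a, -f x := by
    simp only [hf]
  rw [h2, intervalIntegral.integral_neg] at h
  have h3 : (2:ℂ) * (∫ x in (-a)..a, f x) = 0 := by linear_combination -h
  rcases mul_eq_zero.mp h3 with h4 | h4
  · norm_num at h4
  · exact h4

lemma cont_eval (p : Polynomial ℂ) : Continuous (fun x : ℝ => p.eval (x : ℂ)) :=
  p.continuous_aeval.comp Complex.continuous_ofReal

lemma deriv_parity {p : Polynomial ℂ} (ε : ℂ) (h : ∀ z : ℂ, p.eval (-z) = ε * p.eval z) :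
    ∀ z : ℂ, (derivative p).eval (-z) = -ε * (derivative p).eval z := by
  have hcomp : p.comp (-X) = Polynomial.C ε * p := by
    apply Polynomial.funext
    intro r
    simp [Polynomial.eval_comp, h r]
  have hd := congrArg Polynomial.derivative hcomp
  rw [Polynomial.derivative_comp, Polynomial.derivative_mul, Polynomial.derivative_C] at hd
  intro z
  have := congrArg (Polynomial.eval z) hd
  simp only [Polynomial.derivative_neg, Polynomial.derivative_X, Polynomial.eval_mul,
    Polynomial.eval_neg, Polynomial.eval_one, Polynomial.eval_comp, Polynomial.eval_X,
    Polynomial.eval_C, zero_mul, zero_add] at this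
  have h2 : (derivative p).eval (-z) = -(ε * (derivative p).eval z) := by
    linear_combination -this
  rw [h2]; ring

theorem statement16 (a : ℝ) (ha : 0 < a) (p q : Polynomial ℂ)
    (hpar : (∀ z : ℂ, p.eval (-z) = p.eval z ∧ q.eval (-z) = q.eval z)
          ∨ (∀ z : ℂ, p.eval (-z) = -p.eval z ∧ q.eval (-z) = -q.eval z))
    (hpa : p.eval (a : ℂ) = 0) (hpna : p.eval (-(a : ℂ)) = 0)
    (hqa : q.eval (a : ℂ) = 0) (hqna : q.eval (-(a : ℂ)) = 0) :
    dirInner a (Polynomial.X * p) q + dirInner a p (Polynomial.X * q) = 0 := by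
  -- notation
  set P : ℝ → ℂ := fun x => p.eval (x : ℂ) with hP
  set Q : ℝ → ℂ := fun x => q.eval (x : ℂ) with hQ
  set dP : ℝ → ℂ := fun x => (derivative p).eval (x : ℂ) with hdP
  set dQ : ℝ → ℂ := fun x => (derivative q).eval (x : ℂ) with hdQ
  -- parity: P * conj Q and dP * conj dQ are even
  have key : ∀ x : ℝ, P (-x) * (starRingEnd ℂ) (Q (-x)) = P x * (starRingEnd ℂ) (Q x) ∧
      dP (-x) * (starRingEnd ℂ) (dQ (-x)) = dP x * (starRingEnd ℂ) (dQ x) := by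
    intro x
    rcases hpar with h | h
    · have hp' := deriv_parity (p := p) 1 (fun z => by simpa using (h z).1)
      have hq' := deriv_parity (p := q) 1 (fun z => by simpa using (h z).2)
      constructor
      · simp only [hP, hQ, Complex.ofReal_neg, (h _).1, (h _).2]
      · simp only [hdP, hdQ, Complex.ofReal_neg, hp' (x : ℂ), hq' (x : ℂ)]
        simp only [map_mul, map_neg, map_one, neg_one_mul, neg_mul, mul_neg, neg_neg]
        ring
    · have hp' := deriv_parity (p := p) (-1) (fun z => by simpa using (h z).1)
      have hq' := deriv_parity (p := q) (-1) (fun z => by simpa using (h z).2)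
      constructor
      · simp only [hP, hQ, Complex.ofReal_neg, (h _).1, (h _).2, map_neg]
        ring
      · simp only [hdP, hdQ, Complex.ofReal_neg, hp' (x : ℂ), hq' (x : ℂ)]
        norm_num
  -- boundary function
  set f : ℝ → ℂ := fun x => P x * (starRingEnd ℂ) (Q x) with hf
  have hderiv : ∀ x : ℝ, HasDerivAt f
      (dP x * (starRingEnd ℂ) (Q x) + P x * (starRingEnd ℂ) (dQ x)) x := by
    intro x
    have h1 : HasDerivAt P (dP x) x := (p.hasDerivAt (x : ℂ)).comp_ofReal
    have h2 : HasDerivAt Q (dQ x) x := (q.hasDerivAt (x : ℂ)).comp_ofReal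
    have h3 : HasDerivAt (fun y => (starRingEnd ℂ) (Q y)) ((starRingEnd ℂ) (dQ x)) x := h2.star
    exact (h1.mul h3).congr_deriv (by ring)
  -- continuity facts
  have cP := cont_eval p
  have cQ := cont_eval q
  have cdP := cont_eval (derivative p)
  have cdQ := cont_eval (derivative q)
  have cConjQ : Continuous fun x : ℝ => (starRingEnd ℂ) (Q x) := Complex.continuous_conj.comp cQ
  have cConjdQ : Continuous fun x : ℝ => (starRingEnd ℂ) (dQ x) := Complex.continuous_conj.comp cdQ
  -- split combined integral
  have hD : (∫ x in (-a)..a, (dP x * (starRingEnd ℂ) (Q x) + P x * (starRingEnd ℂ) (dQ x))) = 0 := by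
    rw [intervalIntegral.integral_eq_sub_of_hasDerivAt (fun x _ => hderiv x)
      (((cdP.mul cConjQ).add (cP.mul cConjdQ)).intervalIntegrable _ _)]
    simp only [hf, hP, hQ, Complex.ofReal_neg]
    rw [hpa, hpna]
    ring
  have hO : (∫ x in (-a)..a, (2 * (x : ℂ) * (P x * (starRingEnd ℂ) (Q x))
        + 2 * (x : ℂ) * (dP x * (starRingEnd ℂ) (dQ x)))) = 0 := by
    apply odd_integral_zero
    intro x
    have k := key x
    push_cast
    rw [k.1, k.2]
    ring
  have cint : ∀ r s : Polynomial ℂ, Continuous (fun x : ℝ =>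
      r.eval (x : ℂ) * (starRingEnd ℂ) (s.eval (x : ℂ))
      + (Polynomial.derivative r).eval (x : ℂ)
          * (starRingEnd ℂ) ((Polynomial.derivative s).eval (x : ℂ))) := fun r s =>
    ((cont_eval r).mul (Complex.continuous_conj.comp (cont_eval s))).add
      ((cont_eval _).mul (Complex.continuous_conj.comp (cont_eval _)))
  -- now rewrite the claim
  unfold dirInner
  rw [← intervalIntegral.integral_add ((cint _ _).intervalIntegrable _ _)
    ((cint _ _).intervalIntegrable _ _)]
  have main : (∫ x in (-a)..a,
      ((Polynomial.X * p).eval (x : ℂ) * (starRingEnd ℂ) (q.eval (x : ℂ))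
        + (Polynomial.derivative (Polynomial.X * p)).eval (x : ℂ)
            * (starRingEnd ℂ) ((Polynomial.derivative q).eval (x : ℂ))
        + (p.eval (x : ℂ) * (starRingEnd ℂ) ((Polynomial.X * q).eval (x : ℂ))
          + (Polynomial.derivative p).eval (x : ℂ)
              * (starRingEnd ℂ) ((Polynomial.derivative (Polynomial.X * q)).eval (x : ℂ))))) =
      (∫ x in (-a)..a, (dP x * (starRingEnd ℂ) (Q x) + P x * (starRingEnd ℂ) (dQ x)))
      + (∫ x in (-a)..a, (2 * (x : ℂ) * (P x * (starRingEnd ℂ) (Q x))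
          + 2 * (x : ℂ) * (dP x * (starRingEnd ℂ) (dQ x)))) := by
    rw [← intervalIntegral.integral_add
      (f := fun x => dP x * (starRingEnd ℂ) (Q x) + P x * (starRingEnd ℂ) (dQ x))
      (g := fun x => 2 * (x : ℂ) * (P x * (starRingEnd ℂ) (Q x))
          + 2 * (x : ℂ) * (dP x * (starRingEnd ℂ) (dQ x)))
      (((cdP.mul cConjQ).add (cP.mul cConjdQ)).intervalIntegrable _ _)
      ((((continuous_const.mul Complex.continuous_ofReal).mul (cP.mul cConjQ)).add
        ((continuous_const.mul Complex.continuous_ofReal).mul (cdP.mul cConjdQ))).intervalIntegrable _ _)]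
    apply intervalIntegral.integral_congr
    intro x _
    simp only [Polynomial.eval_mul, Polynomial.eval_X, Polynomial.derivative_mul,
      Polynomial.derivative_X, Polynomial.eval_add, Polynomial.eval_one, one_mul, map_mul, map_add,
      Complex.conj_ofReal, hP, hQ, hdP, hdQ]
    ring
  rw [main, hD, hO, add_zero]
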